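/- (Core of Proposition on odd characteristic) Let F be a field of characteristic different from 2 and t,r positive integers. Consider the 7-user instance I1' with interfering sets B_1'={2,3,5}, B_2'={3,4,7}, B_3'={4,5,6}, B_4'={1,5,7}, B_5'={2,6,7}, B_6'={1,2,4}, B_7'={1,3,6}. If an encoder matrix H ∈ F^{r×7t} with blocks H_1,…,H_7 ∈ F^{r×t} satisfies the decoding condition rank H_{{i}∪B_i'} = rank H_{B_i'} + t for every i ∈ {1,…,7}, then r > 3t. -/

import Mathlib

open Matrix

/-- The rank of the `r × |L|t` matrix formed by horizontally concatenating the
blocks `H l`, `l ∈ L`, of the block encoder matrix `H = [H_1 | ⋯ | H_m]`. -/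
noncomputable def blockRank {F : Type} [Field F] {m r t : ℕ}
    (H : Fin m → Matrix (Fin r) (Fin t) F) (L : Finset (Fin m)) : ℕ :=
  Matrix.rank (Matrix.of fun (k : Fin r) (p : {l // l ∈ L} × Fin t) => H p.1.1 k p.2)

/-- Interfering sets of the 7-user instance `I1'` (0-based indexing:
user `i : Fin 7` corresponds to user `i+1` of the paper). -/
def I1'interf : Fin 7 → Finset (Fin 7) :=
  ![{1, 2, 4}, {2, 3, 6}, {3, 4, 5}, {0, 4, 6}, {1, 5, 6}, {0, 1, 3}, {0, 2, 5}]

section Aux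

variable {F : Type} [Field F] {m r t : ℕ}

/-- The column span of the `l`-th block. -/
noncomputable def colSpan (H : Fin m → Matrix (Fin r) (Fin t) F) (l : Fin m) :
    Submodule F (Fin r → F) :=
  Submodule.span F (Set.range fun j : Fin t => fun k : Fin r => H l k j)

lemma colSpan_eq_range (H : Fin m → Matrix (Fin r) (Fin t) F) (l : Fin m) :
    colSpan H l = LinearMap.range (H l).mulVecLin := by
  rw [Matrix.range_mulVecLin]
  rfl

lemma blockRank_eq (H : Fin m → Matrix (Fin r) (Fin t) F) (L : Finset (Fin m)) :
    blockRank H L = Module.finrank F (L.sup (colSpan H) : Submodule F (Fin r → F)) := by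
  have key : LinearMap.range (Matrix.of fun (k : Fin r) (p : {l // l ∈ L} × Fin t) =>
      H p.1.1 k p.2).mulVecLin = (L.sup (colSpan H) : Submodule F (Fin r → F)) := by
    rw [Matrix.range_mulVecLin]
    have hset : Set.range (Matrix.of fun (k : Fin r) (p : {l // l ∈ L} × Fin t) =>
        H p.1.1 k p.2).col
        = ⋃ (s : {l // l ∈ L}), Set.range (fun j : Fin t => fun k : Fin r => H s.1 k j) := by
      ext v
      simp only [Set.mem_iUnion, Set.mem_range]
      constructor
      · rintro ⟨⟨s, j⟩, rfl⟩; exact ⟨s, j, rfl⟩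
      · rintro ⟨s, j, rfl⟩; exact ⟨(s, j), rfl⟩
    rw [hset, Submodule.span_iUnion, Finset.sup_eq_iSup, iSup_subtype]
    rfl
  calc blockRank H L
      = Module.finrank F (LinearMap.range (Matrix.of fun (k : Fin r)
          (p : {l // l ∈ L} × Fin t) => H p.1.1 k p.2).mulVecLin) := rfl
    _ = _ := by rw [key]

end Aux

theorem stmt11 {F : Type} [Field F] (hF : ringChar F ≠ 2) (t r : ℕ) (ht : 0 < t) (hr : 0 < r)
    (H : Fin 7 → Matrix (Fin r) (Fin t) F)
    (hdec : ∀ i : Fin 7,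
      blockRank H (insert i (I1'interf i)) = blockRank H (I1'interf i) + t) :
    3 * t < r := by
  by_contra hcon
  push_neg at hcon
  -- hcon : r ≤ 3 * t
  set V : Fin 7 → Submodule F (Fin r → F) := colSpan H with hVdef
  set S : Fin 7 → Submodule F (Fin r → F) := fun i => (I1'interf i).sup V with hSdef
  have hdec2 : ∀ i, Module.finrank F (V i ⊔ S i : Submodule F (Fin r → F))
      = Module.finrank F (S i) + t := by
    intro i
    have h1 := hdec i
    rw [blockRank_eq, blockRank_eq, Finset.sup_insert] at h1
    exact h1
  have hfin : ∀ a b : Submodule F (Fin r → F),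
      Module.finrank F (a ⊔ b : Submodule F (Fin r → F))
        + Module.finrank F (a ⊓ b : Submodule F (Fin r → F))
        = Module.finrank F a + Module.finrank F b := fun a b =>
    Submodule.finrank_sup_add_finrank_inf_eq a b
  have hVle : ∀ l, Module.finrank F (V l) ≤ t := by
    intro l
    rw [hVdef, colSpan_eq_range]
    exact Matrix.rank_le_width (H l)
  have hVt : ∀ i, Module.finrank F (V i) = t := by
    intro i
    have h1 := hdec2 i
    have h2 := hfin (V i) (S i)
    have h3 := hVle i
    omega
  have hdisj : ∀ i, V i ⊓ S i = ⊥ := by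
    intro i
    have h1 := hdec2 i
    have h2 := hfin (V i) (S i)
    have h3 := hVt i
    have h4 : Module.finrank F (V i ⊓ S i : Submodule F (Fin r → F)) = 0 := by omega
    exact Submodule.finrank_eq_zero.mp h4
  have hpair : ∀ i j, j ∈ I1'interf i → V i ⊓ V j = ⊥ := by
    intro i j hj
    have h1 : V j ≤ S i := Finset.le_sup hj
    have h2 : V i ⊓ V j ≤ ⊥ := hdisj i ▸ inf_le_inf_left (V i) h1
    exact le_bot_iff.mp h2
  have hStop : ∀ i, Module.finrank F (S i) ≤ 2 * t := by
    intro i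
    have h1 : Module.finrank F (V i ⊔ S i : Submodule F (Fin r → F)) ≤ r := by
      have h2 := Submodule.finrank_le (V i ⊔ S i)
      rwa [Module.finrank_fin_fun] at h2
    have h3 := hdec2 i
    omega
  have hline : ∀ i a b c, a ∈ I1'interf i → b ∈ I1'interf i → c ∈ I1'interf i →
      V a ⊓ V b = ⊥ → V c ≤ V a ⊔ V b := by
    intro i a b c ha hb hc hab
    have hle1 : V a ⊔ V b ≤ S i := sup_le (Finset.le_sup ha) (Finset.le_sup hb)
    have hfr : Module.finrank F (V a ⊔ V b : Submodule F (Fin r → F)) = 2 * t := by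
      have h2 := hfin (V a) (V b)
      rw [hab, finrank_bot] at h2
      have h3 := hVt a
      have h4 := hVt b
      omega
    have heq : V a ⊔ V b = S i :=
      Submodule.eq_of_le_of_finrank_le hle1 (by rw [hfr]; exact hStop i)
    exact heq ▸ Finset.le_sup hc
  -- pairwise disjointness facts
  have p01 : V 0 ⊓ V 1 = ⊥ := hpair 0 1 (by decide)
  have p12 : V 1 ⊓ V 2 = ⊥ := hpair 1 2 (by decide)
  have p02 : V 0 ⊓ V 2 = ⊥ := hpair 0 2 (by decide)
  have p04 : V 0 ⊓ V 4 = ⊥ := hpair 0 4 (by decide)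
  have p51 : V 5 ⊓ V 1 = ⊥ := hpair 5 1 (by decide)
  have p15 : V 1 ⊓ V 5 = ⊥ := by rw [inf_comm]; exact p51
  have p23 : V 2 ⊓ V 3 = ⊥ := hpair 2 3 (by decide)
  have p45 : V 4 ⊓ V 5 = ⊥ := hpair 4 5 (by decide)
  have p24 : V 2 ⊓ V 4 = ⊥ := hpair 2 4 (by decide)
  have p25 : V 2 ⊓ V 5 = ⊥ := hpair 2 5 (by decide)
  have p41 : V 4 ⊓ V 1 = ⊥ := hpair 4 1 (by decide)
  have p60 : V 6 ⊓ V 0 = ⊥ := hpair 6 0 (by decide)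
  -- line containments
  have l3a : V 3 ≤ V 0 ⊔ V 1 := hline 5 0 1 3 (by decide) (by decide) (by decide) p01
  have l4 : V 4 ≤ V 1 ⊔ V 2 := hline 0 1 2 4 (by decide) (by decide) (by decide) p12
  have l5 : V 5 ≤ V 0 ⊔ V 2 := hline 6 0 2 5 (by decide) (by decide) (by decide) p02
  have l6a : V 6 ≤ V 0 ⊔ V 4 := hline 3 0 4 6 (by decide) (by decide) (by decide) p04
  have l6b : V 6 ≤ V 1 ⊔ V 5 := hline 4 1 5 6 (by decide) (by decide) (by decide) p15
  have l6c : V 6 ≤ V 2 ⊔ V 3 := hline 1 2 3 6 (by decide) (by decide) (by decide) p23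
  have l3b : V 3 ≤ V 4 ⊔ V 5 := hline 2 4 5 3 (by decide) (by decide) (by decide) p45
  -- V 0 ⊓ (V 1 ⊔ V 2) = ⊥
  have h012 : V 0 ⊓ (V 1 ⊔ V 2) = ⊥ := by
    have h1 : V 1 ⊔ V 2 ≤ S 0 :=
      sup_le (Finset.le_sup (by decide)) (Finset.le_sup (by decide))
    exact le_bot_iff.mp (hdisj 0 ▸ inf_le_inf_left (V 0) h1)
  -- uniqueness of decompositions in V 0 ⊕ V 1 ⊕ V 2
  have uniq : ∀ a0 b0 a1 b1 a2 b2 : Fin r → F, a0 ∈ V 0 → b0 ∈ V 0 → a1 ∈ V 1 → b1 ∈ V 1 →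
      a2 ∈ V 2 → b2 ∈ V 2 → a0 + a1 + a2 = b0 + b1 + b2 → a0 = b0 ∧ a1 = b1 ∧ a2 = b2 := by
    intro a0 b0 a1 b1 a2 b2 h0 h0' h1 h1' h2 h2' heq
    have k0 : a0 - b0 ∈ V 0 ⊓ (V 1 ⊔ V 2) := by
      refine ⟨sub_mem h0 h0', ?_⟩
      have hrw : a0 - b0 = (b1 - a1) + (b2 - a2) := by linear_combination heq
      rw [hrw]
      exact Submodule.add_mem_sup (sub_mem h1' h1) (sub_mem h2' h2)
    rw [h012, Submodule.mem_bot, sub_eq_zero] at k0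
    have k1 : a1 - b1 ∈ V 1 ⊓ V 2 := by
      refine ⟨sub_mem h1 h1', ?_⟩
      have hrw : a1 - b1 = b2 - a2 := by linear_combination heq - k0
      rw [hrw]
      exact sub_mem h2' h2
    rw [p12, Submodule.mem_bot, sub_eq_zero] at k1
    refine ⟨k0, k1, by linear_combination heq - k0 - k1⟩
  -- the element chase
  have hV6ne : V 6 ≠ ⊥ := by
    intro h
    have h1 := hVt 6
    rw [h, finrank_bot] at h1
    omega
  obtain ⟨x6, hx6, hx6ne⟩ := (Submodule.ne_bot_iff _).mp hV6ne
  obtain ⟨a0, ha0, a4, ha4, hxa⟩ := Submodule.mem_sup.mp (l6a hx6)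
  obtain ⟨u1, hu1, u2, hu2, hau⟩ := Submodule.mem_sup.mp (l4 ha4)
  obtain ⟨b1, hb1, b5, hb5, hxb⟩ := Submodule.mem_sup.mp (l6b hx6)
  obtain ⟨v0, hv0, v2, hv2, hbv⟩ := Submodule.mem_sup.mp (l5 hb5)
  obtain ⟨c2, hc2, c3, hc3, hxc⟩ := Submodule.mem_sup.mp (l6c hx6)
  obtain ⟨w0, hw0, w1, hw1, hcw⟩ := Submodule.mem_sup.mp (l3a hc3)
  obtain ⟨d4, hd4, d5, hd5, hcd⟩ := Submodule.mem_sup.mp (l3b hc3)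
  obtain ⟨e1, he1, e2, he2, hde⟩ := Submodule.mem_sup.mp (l4 hd4)
  obtain ⟨f0, hf0, f2, hf2, hdf⟩ := Submodule.mem_sup.mp (l5 hd5)
  -- first comparison : a0 + u1 + u2 = v0 + b1 + v2
  obtain ⟨q1, q2, q3⟩ := uniq a0 v0 u1 b1 u2 v2 ha0 hv0 hu1 hb1 hu2 hv2
    (by linear_combination hxa + hau - hxb - hbv)
  -- second comparison : a0 + u1 + u2 = w0 + w1 + c2
  obtain ⟨q4, q5, q6⟩ := uniq a0 w0 u1 w1 u2 c2 ha0 hw0 hu1 hw1 hu2 hc2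
    (by linear_combination hxa + hau - hxc - hcw)
  -- third comparison : w0 + w1 + 0 = f0 + e1 + (e2 + f2)
  obtain ⟨q7, q8, q9⟩ := uniq w0 f0 w1 e1 0 (e2 + f2) hw0 hf0 hw1 he1 (zero_mem _)
    (add_mem he2 hf2) (by linear_combination hcw - hcd - hde - hdf)
  -- a4 = d4, hence u2 = e2
  have ha4d4 : a4 - d4 = 0 := by
    have hmem2 : a4 - d4 ∈ V 2 := by
      have hrw : a4 - d4 = u2 - e2 := by linear_combination -hau + hde + q5 + q8
      rw [hrw]; exact sub_mem hu2 he2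
    have hmem : a4 - d4 ∈ V 2 ⊓ V 4 := ⟨hmem2, sub_mem ha4 hd4⟩
    rwa [p24, Submodule.mem_bot] at hmem
  have hu2e2 : u2 = e2 := by linear_combination hau - hde - q5 - q8 + ha4d4
  -- b5 = d5, hence v2 = f2
  have hb5d5 : b5 - d5 = 0 := by
    have hmem2 : b5 - d5 ∈ V 2 := by
      have hrw : b5 - d5 = v2 - f2 := by linear_combination -hbv + hdf - q1 + q4 + q7
      rw [hrw]; exact sub_mem hv2 hf2
    have hmem : b5 - d5 ∈ V 2 ⊓ V 5 := ⟨hmem2, sub_mem hb5 hd5⟩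
    rwa [p25, Submodule.mem_bot] at hmem
  have hv2f2 : v2 = f2 := by linear_combination hbv - hdf + q1 - q4 - q7 + hb5d5
  -- conclude 2 • u2 = 0
  have h2u2 : (2 : F) • u2 = 0 := by
    have hsum : u2 + u2 = 0 := by linear_combination -q9 + hu2e2 + q3 + hv2f2
    rw [two_smul]; exact hsum
  have hu20 : u2 = 0 := by
    rcases smul_eq_zero.mp h2u2 with h | h
    · exact absurd h (Ring.two_ne_zero hF)
    · exact h
  -- then a4 = u1 ∈ V 1 ⊓ V 4 = ⊥, so a4 = 0
  have ha40 : a4 = 0 := by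
    have hmem1 : a4 ∈ V 1 := by
      have hrw : a4 = u1 := by linear_combination -hau + hu20
      rw [hrw]; exact hu1
    have hmem : a4 ∈ V 4 ⊓ V 1 := ⟨ha4, hmem1⟩
    rwa [p41, Submodule.mem_bot] at hmem
  -- then x6 = a0 ∈ V 6 ⊓ V 0 = ⊥, contradiction
  have hx60 : x6 = 0 := by
    have hmem0 : x6 ∈ V 0 := by
      have hrw : x6 = a0 := by linear_combination -hxa + ha40
      rw [hrw]; exact ha0
    have hmem : x6 ∈ V 6 ⊓ V 0 := ⟨hx6, hmem0⟩
    rwa [p60, Submodule.mem_bot] at hmem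
  exact hx6ne hx60
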